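/- Let L be an algebraically closed field equipped with a valuation v : L → Γ ∪ {∞} written additively (Γ a linearly ordered abelian group). Let P = Σ_{k=0}^d p_k X^k ∈ L[X] with p_d ≠ 0. Let 0 ≤ i < j ≤ d with p_i ≠ 0 and p_j ≠ 0, and let γ ∈ Γ satisfy (j − i)·γ = v(p_i) − v(p_j). Assume that: v(p_k) + k·γ ≥ v(p_i) + i·γ for all k with i < k < j; v(p_k) + k·γ > v(p_i) + i·γ for all k < i; and v(p_k) + k·γ > v(p_j) + j·γ for all k > j (inequalities automatically satisfied when p_k = 0, i.e. v(p_k) = ∞). Then the multiset of roots of P in L, counted with multiplicities, contains exactly j − i roots x with v(x) = γ. -/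

import Mathlib

open scoped Classical
open Polynomial Multiset
set_option linter.unusedSectionVars false

section helpers
variable {L Γ : Type*} [Field L] [AddCommGroup Γ] [LinearOrder Γ] [IsOrderedAddMonoid Γ]
variable {v : L → WithTop Γ}

lemma wt_add_lt_add_of_lt_of_le {a b c d : WithTop Γ} (ha : a ≠ ⊤) (hc : c ≠ ⊤)
    (h1 : a < b) (h2 : c ≤ d) : a + c < b + d := by
  rcases eq_or_ne b ⊤ with hb | hb
  · rw [hb, top_add]
    exact (WithTop.add_ne_top.2 ⟨ha, hc⟩).lt_top
  rcases eq_or_ne d ⊤ with hd | hd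
  · rw [hd, add_top]
    exact (WithTop.add_ne_top.2 ⟨ha, hc⟩).lt_top
  lift a to Γ using ha; lift b to Γ using hb; lift c to Γ using hc; lift d to Γ using hd
  rw [← WithTop.coe_add, ← WithTop.coe_add, WithTop.coe_lt_coe]
  exact add_lt_add_of_lt_of_le (WithTop.coe_lt_coe.1 h1) (WithTop.coe_le_coe.1 h2)

lemma wt_add_lt_add_of_le_of_lt {a b c d : WithTop Γ} (ha : a ≠ ⊤) (hc : c ≠ ⊤)
    (h1 : a ≤ b) (h2 : c < d) : a + c < b + d := by
  rw [add_comm a c, add_comm b d]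
  exact wt_add_lt_add_of_lt_of_le hc ha h2 h1

lemma wt_lt_of_add_lt_add_right {a b c : WithTop Γ} (h : a + c < b + c) : a < b := by
  by_contra hb
  exact absurd (add_le_add_left (not_lt.1 hb) c) (not_le.2 h)

section val
variable (h0 : ∀ x, v x = ⊤ ↔ x = 0)
  (hmul : ∀ x y, v (x * y) = v x + v y)
  (hadd : ∀ x y, min (v x) (v y) ≤ v (x + y))

include h0 hmul in
lemma v_one : v 1 = 0 := by
  have h1 : v 1 ≠ ⊤ := fun h => one_ne_zero ((h0 1).1 h)
  have h := hmul 1 1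
  rw [one_mul] at h
  lift v 1 to Γ using h1 with a ha
  rw [← WithTop.coe_add, WithTop.coe_inj] at h
  have : a = 0 := left_eq_add.mp h
  rw [this, WithTop.coe_zero]

include h0 hmul in
lemma v_neg_one : v (-1 : L) = 0 := by
  have h1 : v (-1 : L) ≠ ⊤ := fun h => (neg_ne_zero.2 one_ne_zero) ((h0 _).1 h)
  have h := hmul (-1 : L) (-1)
  rw [neg_mul_neg, one_mul, v_one h0 hmul] at h
  lift v (-1 : L) to Γ using h1 with a ha
  rw [← WithTop.coe_add, ← WithTop.coe_zero, WithTop.coe_inj] at h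
  have : a = 0 := by
    rcases lt_trichotomy a 0 with hh | hh | hh
    · have h2 := add_lt_add hh hh
      rw [add_zero] at h2
      exact absurd h.symm h2.ne
    · exact hh
    · have h2 := add_lt_add hh hh
      rw [add_zero] at h2
      exact absurd h.symm h2.ne' 
  rw [this, WithTop.coe_zero]

include h0 hmul in
lemma v_neg (x : L) : v (-x) = v x := by
  have := hmul (-1 : L) x
  rw [neg_one_mul, v_neg_one h0 hmul, zero_add] at this
  exact this

include h0 hmul in
lemma v_neg_one_pow (n : ℕ) : v ((-1 : L) ^ n) = 0 := by
  induction n with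
  | zero => simpa using v_one h0 hmul
  | succ n ih => rw [pow_succ, hmul, ih, v_neg_one h0 hmul, zero_add]

include h0 hmul in
lemma v_prod (s : Multiset L) : v s.prod = (s.map v).sum := by
  induction s using Multiset.induction_on with
  | empty => simpa using v_one h0 hmul
  | cons a s ih => simp [hmul, ih]


include h0 in
lemma v_zero : v 0 = ⊤ := (h0 0).2 rfl

include h0 hadd in
lemma vsum_ge' (e c : WithTop Γ) (s : Multiset L) (h : ∀ x ∈ s, c ≤ v x + e) :
    c ≤ v s.sum + e := by
  induction s using Multiset.induction_on with
  | empty => simp [v_zero h0]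
  | cons a s ih =>
    have h1 : c ≤ v a + e := h a (Multiset.mem_cons_self a s)
    have h2 : c ≤ v s.sum + e := ih fun x hx => h x (Multiset.mem_cons_of_mem hx)
    calc c ≤ min (v a + e) (v s.sum + e) := le_min h1 h2
      _ = min (v a) (v s.sum) + e := min_add_add_right _ _ _
      _ ≤ v (a + s.sum) + e := add_le_add_left (hadd _ _) e
      _ = v (a ::ₘ s).sum + e := by rw [Multiset.sum_cons]

include h0 hadd in
lemma vsum_gt' (e c : WithTop Γ) (hc : c ≠ ⊤) (s : Multiset L)
    (h : ∀ x ∈ s, c < v x + e) : c < v s.sum + e := by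
  induction s using Multiset.induction_on with
  | empty => simpa [v_zero h0] using hc.lt_top
  | cons a s ih =>
    have h1 : c < v a + e := h a (Multiset.mem_cons_self a s)
    have h2 : c < v s.sum + e := ih fun x hx => h x (Multiset.mem_cons_of_mem hx)
    calc c < min (v a + e) (v s.sum + e) := lt_min h1 h2
      _ = min (v a) (v s.sum) + e := min_add_add_right _ _ _
      _ ≤ v (a + s.sum) + e := add_le_add_left (hadd _ _) e
      _ = v (a ::ₘ s).sum + e := by rw [Multiset.sum_cons]

include h0 hadd in
lemma vsum_ge (c : WithTop Γ) (s : Multiset L) (h : ∀ x ∈ s, c ≤ v x) :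
    c ≤ v s.sum := by
  simpa using vsum_ge' h0 hadd 0 c s (fun x hx => by simpa using h x hx)

include h0 hadd in
lemma vsum_gt (c : WithTop Γ) (hc : c ≠ ⊤) (s : Multiset L) (h : ∀ x ∈ s, c < v x) :
    c < v s.sum := by
  simpa using vsum_gt' h0 hadd 0 c hc s (fun x hx => by simpa using h x hx)

include h0 hadd in
lemma vfsum_ge' {ι : Type*} (e c : WithTop Γ) (s : Finset ι) (f : ι → L)
    (h : ∀ x ∈ s, c ≤ v (f x) + e) : c ≤ v (∑ x ∈ s, f x) + e := by
  refine vsum_ge' h0 hadd e c (s.1.map f) ?_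
  intro x hx
  obtain ⟨y, hy, rfl⟩ := Multiset.mem_map.1 hx
  exact h y hy

include h0 hadd in
lemma vfsum_gt' {ι : Type*} (e c : WithTop Γ) (hc : c ≠ ⊤) (s : Finset ι) (f : ι → L)
    (h : ∀ x ∈ s, c < v (f x) + e) : c < v (∑ x ∈ s, f x) + e := by
  refine vsum_gt' h0 hadd e c hc (s.1.map f) ?_
  intro x hx
  obtain ⟨y, hy, rfl⟩ := Multiset.mem_map.1 hx
  exact h y hy

include h0 hmul hadd in
lemma vadd_eq {x y : L} (h : v x < v y) : v (x + y) = v x := by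
  refine le_antisymm ?_ ?_
  · have h2 := hadd (x + y) (-y)
    rw [add_neg_cancel_right, v_neg h0 hmul] at h2
    rcases min_le_iff.1 h2 with h3 | h3
    · exact h3
    · exact absurd (h.trans_le h3) (lt_irrefl _)
  · calc v x = min (v x) (v y) := (min_eq_left h.le).symm
      _ ≤ v (x + y) := hadd x y

include h0 hmul hadd in
lemma vfsum_eq {ι : Type*} (s : Finset ι) (f : ι → L) (i0 : ι) (hi0 : i0 ∈ s)
    (hfin : v (f i0) ≠ ⊤) (h : ∀ x ∈ s, x ≠ i0 → v (f i0) < v (f x)) :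
    v (∑ x ∈ s, f x) = v (f i0) := by
  classical
  rw [← Finset.add_sum_erase s f hi0]
  refine vadd_eq h0 hmul hadd ?_
  refine vsum_gt h0 hadd _ hfin _ ?_
  intro x hx
  obtain ⟨y, hy, rfl⟩ := Multiset.mem_map.1 hx
  exact h y (Finset.mem_of_mem_erase hy) (Finset.ne_of_mem_erase hy)

variable (γ : Γ)

lemma smul_ne_top (n : ℕ) : n • (↑γ : WithTop Γ) ≠ ⊤ := by
  rw [← WithTop.coe_nsmul]; exact WithTop.coe_ne_top

omit h0 hmul hadd in
lemma sum_le_smul (s : Multiset L) (h : ∀ x ∈ s, v x ≤ ↑γ) :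
    (s.map v).sum ≤ (Multiset.card s) • (↑γ : WithTop Γ) := by
  induction s using Multiset.induction_on with
  | empty => simp
  | cons a s ih =>
    rw [Multiset.map_cons, Multiset.sum_cons, Multiset.card_cons, succ_nsmul,
      add_comm ((Multiset.card s) • (↑γ : WithTop Γ)) _]
    exact add_le_add (h a (Multiset.mem_cons_self a s))
      (ih fun x hx => h x (Multiset.mem_cons_of_mem hx))

omit h0 hmul hadd in
lemma smul_le_sum (s : Multiset L) (h : ∀ x ∈ s, ↑γ ≤ v x) :
    (Multiset.card s) • (↑γ : WithTop Γ) ≤ (s.map v).sum := by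
  induction s using Multiset.induction_on with
  | empty => simp
  | cons a s ih =>
    rw [Multiset.map_cons, Multiset.sum_cons, Multiset.card_cons, succ_nsmul,
      add_comm ((Multiset.card s) • (↑γ : WithTop Γ)) _]
    exact add_le_add (h a (Multiset.mem_cons_self a s))
      (ih fun x hx => h x (Multiset.mem_cons_of_mem hx))

omit h0 hmul hadd in
lemma sum_ne_top (s : Multiset L) (h : ∀ x ∈ s, v x ≤ ↑γ) : (s.map v).sum ≠ ⊤ :=
  ne_top_of_le_ne_top (smul_ne_top γ _) (sum_le_smul γ s h)

omit h0 hmul hadd in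
lemma sum_lt_smul (s : Multiset L) (hne : s ≠ 0) (h : ∀ x ∈ s, v x < ↑γ) :
    (s.map v).sum < (Multiset.card s) • (↑γ : WithTop Γ) := by
  induction s using Multiset.induction_on with
  | empty => exact absurd rfl hne
  | cons a s _ =>
    rw [Multiset.map_cons, Multiset.sum_cons, Multiset.card_cons, succ_nsmul,
      add_comm ((Multiset.card s) • (↑γ : WithTop Γ)) _]
    have hle : (s.map v).sum ≤ (Multiset.card s) • (↑γ : WithTop Γ) :=
      sum_le_smul γ s fun x hx => (h x (Multiset.mem_cons_of_mem hx)).le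
    exact wt_add_lt_add_of_lt_of_le (h a (Multiset.mem_cons_self a s)).ne_top
      (ne_top_of_le_ne_top (smul_ne_top γ _) hle)
      (h a (Multiset.mem_cons_self a s)) hle

omit h0 hmul hadd in
lemma smul_lt_sum (s : Multiset L) (hne : s ≠ 0) (h : ∀ x ∈ s, ↑γ < v x) :
    (Multiset.card s) • (↑γ : WithTop Γ) < (s.map v).sum := by
  induction s using Multiset.induction_on with
  | empty => exact absurd rfl hne
  | cons a s _ =>
    rw [Multiset.map_cons, Multiset.sum_cons, Multiset.card_cons, succ_nsmul,
      add_comm ((Multiset.card s) • (↑γ : WithTop Γ)) _]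
    exact wt_add_lt_add_of_lt_of_le WithTop.coe_ne_top (smul_ne_top γ _)
      (h a (Multiset.mem_cons_self a s))
      (smul_le_sum γ s fun x hx => (h x (Multiset.mem_cons_of_mem hx)).le)

omit h0 hmul hadd in
lemma QQ_monic (s : Multiset L) : ((s.map fun r => X - C r).prod).Monic :=
  monic_multiset_prod_of_monic _ _ fun r _ => monic_X_sub_C r

omit h0 hmul hadd in
lemma QQ_natDegree (s : Multiset L) :
    ((s.map fun r => X - C r).prod).natDegree = Multiset.card s := by
  rw [natDegree_multiset_prod_of_monic _ fun f hf => by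
    obtain ⟨r, _, rfl⟩ := Multiset.mem_map.1 hf; exact monic_X_sub_C r]
  simp [Multiset.map_map, Function.comp_def]

include h0 hmul in
lemma v_coeff_esymm (s : Multiset L) {k : ℕ} (hk : k ≤ Multiset.card s) :
    v (((s.map fun r => X - C r).prod).coeff k) = v (s.esymm (Multiset.card s - k)) := by
  rw [Multiset.prod_X_sub_C_coeff s hk, hmul, v_neg_one_pow h0 hmul, zero_add]

include h0 hmul hadd in
lemma lemB_ge (s : Multiset L) (hs : ∀ x ∈ s, v x ≤ ↑γ) (u : ℕ) :
    (s.map v).sum ≤ v (((s.map fun r => X - C r).prod).coeff u) + u • (↑γ : WithTop Γ) := by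
  by_cases hu : u ≤ Multiset.card s
  · rw [v_coeff_esymm h0 hmul s hu]
    refine vsum_ge' h0 hadd _ _ _ ?_
    intro t ht
    obtain ⟨S, hS, rfl⟩ := Multiset.mem_map.1 ht
    obtain ⟨hSle, hScard⟩ := Multiset.mem_powersetCard.1 hS
    rw [v_prod h0 hmul]
    have hsplit : s - S + S = s := tsub_add_cancel_of_le hSle
    have hcards : Multiset.card (s - S) = u := by
      rw [Multiset.card_sub hSle, hScard, Nat.sub_sub_self hu]
    have hmemsub : ∀ x ∈ s - S, v x ≤ ↑γ := fun x hx => hs x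
      (by rw [← hsplit]; exact Multiset.mem_add.2 (Or.inl hx))
    calc (s.map v).sum = ((s - S).map v).sum + (S.map v).sum := by
          rw [← Multiset.sum_add, ← Multiset.map_add, hsplit]
      _ ≤ u • (↑γ : WithTop Γ) + (S.map v).sum := by
          refine add_le_add_left ?_ _
          rw [← hcards]
          exact sum_le_smul γ _ hmemsub
      _ = (S.map v).sum + u • (↑γ : WithTop Γ) := add_comm _ _
  · have hz : ((s.map fun r => X - C r).prod).coeff u = 0 :=
      Polynomial.coeff_eq_zero_of_natDegree_lt (by rw [QQ_natDegree]; omega)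
    rw [hz, v_zero h0, top_add]
    exact le_top

include h0 hmul hadd in
lemma lemB_gt (s : Multiset L) (hs : ∀ x ∈ s, v x < ↑γ) {u : ℕ} (hu1 : 1 ≤ u) :
    (s.map v).sum < v (((s.map fun r => X - C r).prod).coeff u) + u • (↑γ : WithTop Γ) := by
  have hfin : (s.map v).sum ≠ ⊤ := sum_ne_top γ s fun x hx => (hs x hx).le
  by_cases hu : u ≤ Multiset.card s
  · rw [v_coeff_esymm h0 hmul s hu]
    refine vsum_gt' h0 hadd _ _ hfin _ ?_
    intro t ht
    obtain ⟨S, hS, rfl⟩ := Multiset.mem_map.1 ht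
    obtain ⟨hSle, hScard⟩ := Multiset.mem_powersetCard.1 hS
    rw [v_prod h0 hmul]
    have hsplit : s - S + S = s := tsub_add_cancel_of_le hSle
    have hcards : Multiset.card (s - S) = u := by
      rw [Multiset.card_sub hSle, hScard, Nat.sub_sub_self hu]
    have hmemsub : ∀ x ∈ s - S, v x < ↑γ := fun x hx => hs x
      (by rw [← hsplit]; exact Multiset.mem_add.2 (Or.inl hx))
    have hne : s - S ≠ 0 := by
      intro hzero
      rw [hzero, Multiset.card_zero] at hcards; omega
    calc (s.map v).sum = ((s - S).map v).sum + (S.map v).sum := by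
          rw [← Multiset.sum_add, ← Multiset.map_add, hsplit]
      _ < u • (↑γ : WithTop Γ) + (S.map v).sum := by
          refine wt_add_lt_add_of_lt_of_le ?_ ?_ ?_ le_rfl
          · exact sum_ne_top γ _ fun x hx => (hmemsub x hx).le
          · exact sum_ne_top γ _ fun x hx => (hs x (Multiset.subset_of_le hSle hx)).le
          · rw [← hcards]
            exact sum_lt_smul γ _ hne hmemsub
      _ = (S.map v).sum + u • (↑γ : WithTop Γ) := add_comm _ _
  · have hz : ((s.map fun r => X - C r).prod).coeff u = 0 :=
      Polynomial.coeff_eq_zero_of_natDegree_lt (by rw [QQ_natDegree]; omega)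
    rw [hz, v_zero h0, top_add]
    exact hfin.lt_top

include h0 hmul in
lemma lemB_zero (s : Multiset L) :
    v (((s.map fun r => X - C r).prod).coeff 0) = (s.map v).sum := by
  rw [v_coeff_esymm h0 hmul s (Nat.zero_le _), Nat.sub_zero]
  have hps : Multiset.powersetCard (Multiset.card s) s = {s} := by
    have hcard : Multiset.card (Multiset.powersetCard (Multiset.card s) s) = 1 := by
      rw [Multiset.card_powersetCard, Nat.choose_self]
    obtain ⟨a, ha⟩ := Multiset.card_eq_one.1 hcard
    have hmem : s ∈ Multiset.powersetCard (Multiset.card s) s :=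
      Multiset.mem_powersetCard.2 ⟨le_refl s, rfl⟩
    rw [ha] at hmem ⊢
    rw [Multiset.mem_singleton.1 hmem]
  rw [Multiset.esymm, hps]
  simp [v_prod h0 hmul]

include h0 hmul hadd in
lemma lemA_ge (s : Multiset L) (hs : ∀ x ∈ s, ↑γ ≤ v x) (w : ℕ) :
    (Multiset.card s) • (↑γ : WithTop Γ) ≤
      v (((s.map fun r => X - C r).prod).coeff w) + w • (↑γ : WithTop Γ) := by
  by_cases hw : w ≤ Multiset.card s
  · rw [v_coeff_esymm h0 hmul s hw]
    refine vsum_ge' h0 hadd _ _ _ ?_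
    intro t ht
    obtain ⟨S, hS, rfl⟩ := Multiset.mem_map.1 ht
    obtain ⟨hSle, hScard⟩ := Multiset.mem_powersetCard.1 hS
    rw [v_prod h0 hmul]
    calc (Multiset.card s) • (↑γ : WithTop Γ)
        = (Multiset.card s - w) • (↑γ : WithTop Γ) + w • (↑γ : WithTop Γ) := by
          rw [← add_nsmul, Nat.sub_add_cancel hw]
      _ ≤ (S.map v).sum + w • (↑γ : WithTop Γ) := by
          refine add_le_add_left ?_ _
          rw [← hScard]
          exact smul_le_sum γ S fun x hx => hs x (Multiset.subset_of_le hSle hx)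
  · have hz : ((s.map fun r => X - C r).prod).coeff w = 0 :=
      Polynomial.coeff_eq_zero_of_natDegree_lt (by rw [QQ_natDegree]; omega)
    rw [hz, v_zero h0, top_add]
    exact le_top

include h0 hmul hadd in
lemma lemA_gt (s : Multiset L) (hs : ∀ x ∈ s, ↑γ < v x) {w : ℕ} (hw : w < Multiset.card s) :
    (Multiset.card s) • (↑γ : WithTop Γ) <
      v (((s.map fun r => X - C r).prod).coeff w) + w • (↑γ : WithTop Γ) := by
  rw [v_coeff_esymm h0 hmul s hw.le]
  refine vsum_gt' h0 hadd _ _ (smul_ne_top γ _) _ ?_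
  intro t ht
  obtain ⟨S, hS, rfl⟩ := Multiset.mem_map.1 ht
  obtain ⟨hSle, hScard⟩ := Multiset.mem_powersetCard.1 hS
  rw [v_prod h0 hmul]
  have hne : S ≠ 0 := by
    intro hzero
    rw [hzero, Multiset.card_zero] at hScard; omega
  calc (Multiset.card s) • (↑γ : WithTop Γ)
      = (Multiset.card s - w) • (↑γ : WithTop Γ) + w • (↑γ : WithTop Γ) := by
        rw [← add_nsmul, Nat.sub_add_cancel hw.le]
    _ < (S.map v).sum + w • (↑γ : WithTop Γ) := by
        refine wt_add_lt_add_of_lt_of_le (smul_ne_top γ _) (smul_ne_top γ _) ?_ le_rfl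
        rw [← hScard]
        exact smul_lt_sum γ S hne fun x hx => hs x (Multiset.subset_of_le hSle hx)

include h0 hmul in
lemma lemM_zero (s : Multiset L) (hs : ∀ x ∈ s, v x = ↑γ) :
    v (((s.map fun r => X - C r).prod).coeff 0) = (Multiset.card s) • (↑γ : WithTop Γ) := by
  rw [lemB_zero h0 hmul s]
  rw [Multiset.map_congr rfl hs]
  simp [Multiset.map_const']

include h0 hmul in
lemma lem_top (s : Multiset L) :
    v (((s.map fun r => X - C r).prod).coeff (Multiset.card s)) = 0 := by
  have h := (QQ_monic s).coeff_natDegree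
  rw [QQ_natDegree] at h
  rw [h, v_one h0 hmul]

include h0 hmul hadd in
lemma lem_mul_eq (p q : Polynomial L) (k u0 t0 : ℕ) (hk : u0 + t0 = k)
    (hfin : v (p.coeff u0) + v (q.coeff t0) ≠ ⊤)
    (h : ∀ u t, u + t = k → (u, t) ≠ (u0, t0) →
      v (p.coeff u0) + v (q.coeff t0) < v (p.coeff u) + v (q.coeff t)) :
    v ((p * q).coeff k) = v (p.coeff u0) + v (q.coeff t0) := by
  rw [Polynomial.coeff_mul]
  have h1 := vfsum_eq h0 hmul hadd (Finset.HasAntidiagonal.antidiagonal k)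
    (fun x => p.coeff x.1 * q.coeff x.2) (u0, t0)
    (Finset.HasAntidiagonal.mem_antidiagonal.2 hk) (by rw [hmul]; exact hfin) ?_
  · rw [h1, hmul]
  · intro x hx hne
    rw [hmul, hmul]
    exact h x.1 x.2 (Finset.HasAntidiagonal.mem_antidiagonal.1 hx) (by simpa using hne)

end val
end helpers

/-- **Root-counting property of the Newton polygon.**
Let `L` be an algebraically closed field with an additively-written valuation
`v : L → Γ ∪ {∞}`. Let `P` have degree `d`, with `p_i ≠ 0`, `p_j ≠ 0` (`i < j ≤ d`), and
let `γ ∈ Γ` satisfy `(j−i)·γ = v(p_i) − v(p_j)`. If the segment from `(i, v(p_i))` to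
`(j, v(p_j))` lies on the lower convex hull of the points `(k, v(p_k))` (the stated
inequalities), then `P` has exactly `j − i` roots `x` (with multiplicity) with `v(x) = γ`. -/
theorem newton_polygon_root_count {L Γ : Type*} [Field L] [IsAlgClosed L]
    [AddCommGroup Γ] [LinearOrder Γ] [IsOrderedAddMonoid Γ] (v : L → WithTop Γ)
    (h0 : ∀ x, v x = ⊤ ↔ x = 0)
    (hmul : ∀ x y, v (x * y) = v x + v y)
    (hadd : ∀ x y, min (v x) (v y) ≤ v (x + y))
    (P : Polynomial L) (d : ℕ) (hdeg : P.natDegree = d) (hP : P ≠ 0)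
    (i j : ℕ) (hij : i < j) (hjd : j ≤ d)
    (hpi : P.coeff i ≠ 0) (hpj : P.coeff j ≠ 0)
    (γ : Γ) (hγ : (j - i) • (↑γ : WithTop Γ) + v (P.coeff j) = v (P.coeff i))
    (hmid : ∀ k, i < k → k < j →
      v (P.coeff i) + i • (↑γ : WithTop Γ) ≤ v (P.coeff k) + k • (↑γ : WithTop Γ))
    (hlow : ∀ k, k < i →
      v (P.coeff i) + i • (↑γ : WithTop Γ) < v (P.coeff k) + k • (↑γ : WithTop Γ))
    (hhigh : ∀ k, j < k → k ≤ d →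
      v (P.coeff j) + j • (↑γ : WithTop Γ) < v (P.coeff k) + k • (↑γ : WithTop Γ)) :
    Multiset.card (P.roots.filter (fun x => v x = (↑γ : WithTop Γ))) = j - i := by
  classical
  have hsplits : P.Splits := IsAlgClosed.splits P
  have hcardR : Multiset.card P.roots = d :=
    (Polynomial.splits_iff_card_roots.1 hsplits).trans hdeg
  set B := P.roots.filter (fun x => v x < (↑γ : WithTop Γ)) with hBdef
  set M := P.roots.filter (fun x => v x = (↑γ : WithTop Γ)) with hMdef
  set A := P.roots.filter (fun x => (↑γ : WithTop Γ) < v x) with hAdef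
  have hRsplit : P.roots = B + (M + A) := by
    rw [hBdef, hMdef, hAdef]
    ext x
    simp only [Multiset.count_add, Multiset.count_filter]
    rcases lt_trichotomy (v x) (↑γ : WithTop Γ) with h | h | h
    · simp [h, h.ne, asymm h]
    · simp [h]
    · simp [h, h.ne', asymm h]
  have hB : ∀ x ∈ B, v x < (↑γ : WithTop Γ) := by
    intro x hx
    rw [hBdef, Multiset.mem_filter] at hx
    exact hx.2
  have hM : ∀ x ∈ M, v x = (↑γ : WithTop Γ) := by
    intro x hx
    rw [hMdef, Multiset.mem_filter] at hx
    exact hx.2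
  have hA : ∀ x ∈ A, (↑γ : WithTop Γ) < v x := by
    intro x hx
    rw [hAdef, Multiset.mem_filter] at hx
    exact hx.2
  have hdsum : Multiset.card B + (Multiset.card M + Multiset.card A) = d := by
    rw [← hcardR, hRsplit]; simp
  set QB := (B.map fun r => X - C r).prod with hQB
  set QM := (M.map fun r => X - C r).prod with hQM
  set QA := (A.map fun r => X - C r).prod with hQA
  have hPfact : P = C P.leadingCoeff * (QB * (QM * QA)) := by
    conv_lhs => rw [Polynomial.Splits.eq_prod_roots hsplits]
    rw [hRsplit, Multiset.map_add, Multiset.map_add, Multiset.prod_add, Multiset.prod_add]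
  -- MA level bounds
  have hge_MA : ∀ t : ℕ, (Multiset.card M + Multiset.card A) • (↑γ : WithTop Γ) ≤
      v ((QM * QA).coeff t) + t • (↑γ : WithTop Γ) := by
    intro t
    rw [Polynomial.coeff_mul]
    refine vfsum_ge' h0 hadd _ _ _ _ ?_
    intro x hx
    have hxk := Finset.HasAntidiagonal.mem_antidiagonal.1 hx
    have h1 := lemA_ge h0 hmul hadd γ M (fun y hy => (hM y hy).ge) x.1
    have h2 := lemA_ge h0 hmul hadd γ A (fun y hy => (hA y hy).le) x.2
    calc (Multiset.card M + Multiset.card A) • (↑γ : WithTop Γ)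
        = Multiset.card M • (↑γ : WithTop Γ) + Multiset.card A • (↑γ : WithTop Γ) :=
          add_nsmul _ _ _
      _ ≤ (v (QM.coeff x.1) + x.1 • (↑γ : WithTop Γ)) +
          (v (QA.coeff x.2) + x.2 • (↑γ : WithTop Γ)) := add_le_add h1 h2
      _ = (v (QM.coeff x.1) + v (QA.coeff x.2)) +
          (x.1 • (↑γ : WithTop Γ) + x.2 • (↑γ : WithTop Γ)) := add_add_add_comm _ _ _ _
      _ = v (QM.coeff x.1 * QA.coeff x.2) + t • (↑γ : WithTop Γ) := by
          rw [hmul, ← add_nsmul, hxk]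
  have hgt_MA : ∀ t : ℕ, t < Multiset.card A →
      (Multiset.card M + Multiset.card A) • (↑γ : WithTop Γ) <
      v ((QM * QA).coeff t) + t • (↑γ : WithTop Γ) := by
    intro t ht
    rw [Polynomial.coeff_mul]
    refine vfsum_gt' h0 hadd _ _ (smul_ne_top γ _) _ _ ?_
    intro x hx
    have hxk := Finset.HasAntidiagonal.mem_antidiagonal.1 hx
    have h1 := lemA_ge h0 hmul hadd γ M (fun y hy => (hM y hy).ge) x.1
    have h2 := lemA_gt h0 hmul hadd γ A hA (w := x.2) (by omega)
    calc (Multiset.card M + Multiset.card A) • (↑γ : WithTop Γ)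
        = Multiset.card M • (↑γ : WithTop Γ) + Multiset.card A • (↑γ : WithTop Γ) :=
          add_nsmul _ _ _
      _ < (v (QM.coeff x.1) + x.1 • (↑γ : WithTop Γ)) +
          (v (QA.coeff x.2) + x.2 • (↑γ : WithTop Γ)) :=
          wt_add_lt_add_of_le_of_lt (smul_ne_top γ _) (smul_ne_top γ _) h1 h2
      _ = (v (QM.coeff x.1) + v (QA.coeff x.2)) +
          (x.1 • (↑γ : WithTop Γ) + x.2 • (↑γ : WithTop Γ)) := add_add_add_comm _ _ _ _
      _ = v (QM.coeff x.1 * QA.coeff x.2) + t • (↑γ : WithTop Γ) := by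
          rw [hmul, ← add_nsmul, hxk]
  have heq_MA_a : v ((QM * QA).coeff (Multiset.card A)) =
      (Multiset.card M) • (↑γ : WithTop Γ) := by
    have hres := lem_mul_eq h0 hmul hadd QM QA (Multiset.card A) 0 (Multiset.card A)
      (zero_add _) ?_ ?_
    · rw [hres, lemM_zero h0 hmul γ M hM, lem_top h0 hmul A, add_zero]
    · rw [lemM_zero h0 hmul γ M hM, lem_top h0 hmul A, add_zero]
      exact smul_ne_top γ _
    · intro u t hut hne
      have ht : t < Multiset.card A := by
        rcases Nat.lt_or_ge t (Multiset.card A) with h | h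
        · exact h
        · exfalso
          apply hne
          have h1 : t = Multiset.card A := by omega
          have h2 : u = 0 := by omega
          rw [h1, h2]
      have h1 := lemA_ge h0 hmul hadd γ M (fun y hy => (hM y hy).ge) u
      have h2 := lemA_gt h0 hmul hadd γ A hA (w := t) ht
      rw [lemM_zero h0 hmul γ M hM, lem_top h0 hmul A, add_zero]
      refine wt_lt_of_add_lt_add_right
        (c := (Multiset.card A) • (↑γ : WithTop Γ)) ?_
      calc Multiset.card M • (↑γ : WithTop Γ) + Multiset.card A • (↑γ : WithTop Γ)
          < (v (QM.coeff u) + u • (↑γ : WithTop Γ)) +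
            (v (QA.coeff t) + t • (↑γ : WithTop Γ)) :=
            wt_add_lt_add_of_le_of_lt (smul_ne_top γ _) (smul_ne_top γ _) h1 h2
        _ = (v (QM.coeff u) + v (QA.coeff t)) +
            (u • (↑γ : WithTop Γ) + t • (↑γ : WithTop Γ)) := add_add_add_comm _ _ _ _
        _ = (v (QM.coeff u) + v (QA.coeff t)) + (Multiset.card A) • (↑γ : WithTop Γ) := by
            rw [← add_nsmul, hut]
  have hmonicMA : (QM * QA).Monic := (QQ_monic M).mul (QQ_monic A)
  have hdegMA : (QM * QA).natDegree = Multiset.card M + Multiset.card A := by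
    rw [Polynomial.Monic.natDegree_mul (QQ_monic M) (QQ_monic A), QQ_natDegree, QQ_natDegree]
  have heq_MA_b : v ((QM * QA).coeff (Multiset.card M + Multiset.card A)) = 0 := by
    have h1 := hmonicMA.coeff_natDegree
    rw [hdegMA] at h1
    rw [h1, v_one h0 hmul]
  -- Q level
  set SB := (B.map v).sum with hSBdef
  have hSBfin : SB ≠ ⊤ := sum_ne_top γ B fun x hx => (hB x hx).le
  have hQge : ∀ k : ℕ, SB + (Multiset.card M + Multiset.card A) • (↑γ : WithTop Γ) ≤
      v ((QB * (QM * QA)).coeff k) + k • (↑γ : WithTop Γ) := by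
    intro k
    rw [Polynomial.coeff_mul]
    refine vfsum_ge' h0 hadd _ _ _ _ ?_
    intro x hx
    have hxk := Finset.HasAntidiagonal.mem_antidiagonal.1 hx
    have h1 := lemB_ge h0 hmul hadd γ B (fun y hy => (hB y hy).le) x.1
    have h2 := hge_MA x.2
    calc SB + (Multiset.card M + Multiset.card A) • (↑γ : WithTop Γ)
        ≤ (v (QB.coeff x.1) + x.1 • (↑γ : WithTop Γ)) +
          (v ((QM * QA).coeff x.2) + x.2 • (↑γ : WithTop Γ)) := add_le_add h1 h2
      _ = (v (QB.coeff x.1) + v ((QM * QA).coeff x.2)) +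
          (x.1 • (↑γ : WithTop Γ) + x.2 • (↑γ : WithTop Γ)) := add_add_add_comm _ _ _ _
      _ = v (QB.coeff x.1 * (QM * QA).coeff x.2) + k • (↑γ : WithTop Γ) := by
          rw [hmul, ← add_nsmul, hxk]
  have hQlow : ∀ k : ℕ, k < Multiset.card A →
      SB + (Multiset.card M + Multiset.card A) • (↑γ : WithTop Γ) <
      v ((QB * (QM * QA)).coeff k) + k • (↑γ : WithTop Γ) := by
    intro k hk
    rw [Polynomial.coeff_mul]
    refine vfsum_gt' h0 hadd _ _ (WithTop.add_ne_top.2 ⟨hSBfin, smul_ne_top γ _⟩) _ _ ?_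
    intro x hx
    have hxk := Finset.HasAntidiagonal.mem_antidiagonal.1 hx
    have hkey : SB + (Multiset.card M + Multiset.card A) • (↑γ : WithTop Γ) <
        (v (QB.coeff x.1) + x.1 • (↑γ : WithTop Γ)) +
        (v ((QM * QA).coeff x.2) + x.2 • (↑γ : WithTop Γ)) := by
      rcases Nat.eq_zero_or_pos x.1 with h | h
      · exact wt_add_lt_add_of_le_of_lt hSBfin (smul_ne_top γ _)
          (lemB_ge h0 hmul hadd γ B (fun y hy => (hB y hy).le) x.1)
          (hgt_MA x.2 (by omega))
      · exact wt_add_lt_add_of_lt_of_le hSBfin (smul_ne_top γ _)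
          (lemB_gt h0 hmul hadd γ B hB h) (hge_MA x.2)
    calc SB + (Multiset.card M + Multiset.card A) • (↑γ : WithTop Γ)
        < (v (QB.coeff x.1) + x.1 • (↑γ : WithTop Γ)) +
          (v ((QM * QA).coeff x.2) + x.2 • (↑γ : WithTop Γ)) := hkey
      _ = (v (QB.coeff x.1) + v ((QM * QA).coeff x.2)) +
          (x.1 • (↑γ : WithTop Γ) + x.2 • (↑γ : WithTop Γ)) := add_add_add_comm _ _ _ _
      _ = v (QB.coeff x.1 * (QM * QA).coeff x.2) + k • (↑γ : WithTop Γ) := by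
          rw [hmul, ← add_nsmul, hxk]
  have hQhigh : ∀ k : ℕ, Multiset.card M + Multiset.card A < k →
      SB + (Multiset.card M + Multiset.card A) • (↑γ : WithTop Γ) <
      v ((QB * (QM * QA)).coeff k) + k • (↑γ : WithTop Γ) := by
    intro k hk
    rw [Polynomial.coeff_mul]
    refine vfsum_gt' h0 hadd _ _ (WithTop.add_ne_top.2 ⟨hSBfin, smul_ne_top γ _⟩) _ _ ?_
    intro x hx
    have hxk := Finset.HasAntidiagonal.mem_antidiagonal.1 hx
    rcases Nat.eq_zero_or_pos x.1 with h | h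
    · have hx2 : (QM * QA).coeff x.2 = 0 :=
        Polynomial.coeff_eq_zero_of_natDegree_lt (by rw [hdegMA]; omega)
      rw [hx2, mul_zero, v_zero h0, top_add]
      exact (WithTop.add_ne_top.2 ⟨hSBfin, smul_ne_top γ _⟩).lt_top
    · calc SB + (Multiset.card M + Multiset.card A) • (↑γ : WithTop Γ)
          < (v (QB.coeff x.1) + x.1 • (↑γ : WithTop Γ)) +
            (v ((QM * QA).coeff x.2) + x.2 • (↑γ : WithTop Γ)) :=
            wt_add_lt_add_of_lt_of_le hSBfin (smul_ne_top γ _)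
              (lemB_gt h0 hmul hadd γ B hB h) (hge_MA x.2)
        _ = (v (QB.coeff x.1) + v ((QM * QA).coeff x.2)) +
            (x.1 • (↑γ : WithTop Γ) + x.2 • (↑γ : WithTop Γ)) := add_add_add_comm _ _ _ _
        _ = v (QB.coeff x.1 * (QM * QA).coeff x.2) + k • (↑γ : WithTop Γ) := by
            rw [hmul, ← add_nsmul, hxk]
  have hQa : v ((QB * (QM * QA)).coeff (Multiset.card A)) =
      SB + (Multiset.card M) • (↑γ : WithTop Γ) := by
    have hres := lem_mul_eq h0 hmul hadd QB (QM * QA) (Multiset.card A) 0 (Multiset.card A)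
      (zero_add _) ?_ ?_
    · rw [hres, lemB_zero h0 hmul B, heq_MA_a, hSBdef]
    · rw [lemB_zero h0 hmul B, heq_MA_a, ← hSBdef]
      exact WithTop.add_ne_top.2 ⟨hSBfin, smul_ne_top γ _⟩
    · intro u t hut hne
      have hu : 1 ≤ u := by
        rcases Nat.eq_zero_or_pos u with h | h
        · exfalso; apply hne
          have h1 : t = Multiset.card A := by omega
          rw [h, h1]
        · exact h
      rw [lemB_zero h0 hmul B, heq_MA_a, ← hSBdef]
      refine wt_lt_of_add_lt_add_right (c := (Multiset.card A) • (↑γ : WithTop Γ)) ?_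
      calc (SB + Multiset.card M • (↑γ : WithTop Γ)) + Multiset.card A • (↑γ : WithTop Γ)
          = SB + (Multiset.card M + Multiset.card A) • (↑γ : WithTop Γ) := by
            rw [add_nsmul, add_assoc]
        _ < (v (QB.coeff u) + u • (↑γ : WithTop Γ)) +
            (v ((QM * QA).coeff t) + t • (↑γ : WithTop Γ)) :=
            wt_add_lt_add_of_lt_of_le hSBfin (smul_ne_top γ _)
              (lemB_gt h0 hmul hadd γ B hB hu) (hge_MA t)
        _ = (v (QB.coeff u) + v ((QM * QA).coeff t)) +
            (u • (↑γ : WithTop Γ) + t • (↑γ : WithTop Γ)) := add_add_add_comm _ _ _ _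
        _ = (v (QB.coeff u) + v ((QM * QA).coeff t)) +
            (Multiset.card A) • (↑γ : WithTop Γ) := by rw [← add_nsmul, hut]
  have hQb : v ((QB * (QM * QA)).coeff (Multiset.card M + Multiset.card A)) = SB := by
    have hres := lem_mul_eq h0 hmul hadd QB (QM * QA)
      (Multiset.card M + Multiset.card A) 0 (Multiset.card M + Multiset.card A)
      (zero_add _) ?_ ?_
    · rw [hres, lemB_zero h0 hmul B, heq_MA_b, add_zero, hSBdef]
    · rw [lemB_zero h0 hmul B, heq_MA_b, add_zero, ← hSBdef]
      exact hSBfin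
    · intro u t hut hne
      have hu : 1 ≤ u := by
        rcases Nat.eq_zero_or_pos u with h | h
        · exfalso; apply hne
          have h1 : t = Multiset.card M + Multiset.card A := by omega
          rw [h, h1]
        · exact h
      rw [lemB_zero h0 hmul B, heq_MA_b, add_zero, ← hSBdef]
      refine wt_lt_of_add_lt_add_right
        (c := (Multiset.card M + Multiset.card A) • (↑γ : WithTop Γ)) ?_
      calc SB + (Multiset.card M + Multiset.card A) • (↑γ : WithTop Γ)
          < (v (QB.coeff u) + u • (↑γ : WithTop Γ)) +
            (v ((QM * QA).coeff t) + t • (↑γ : WithTop Γ)) :=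
            wt_add_lt_add_of_lt_of_le hSBfin (smul_ne_top γ _)
              (lemB_gt h0 hmul hadd γ B hB hu) (hge_MA t)
        _ = (v (QB.coeff u) + v ((QM * QA).coeff t)) +
            (u • (↑γ : WithTop Γ) + t • (↑γ : WithTop Γ)) := add_add_add_comm _ _ _ _
        _ = (v (QB.coeff u) + v ((QM * QA).coeff t)) +
            (Multiset.card M + Multiset.card A) • (↑γ : WithTop Γ) := by
            rw [← add_nsmul, hut]
  -- P level
  have hvc : v P.leadingCoeff ≠ ⊤ :=
    fun h => Polynomial.leadingCoeff_ne_zero.2 hP ((h0 _).1 h)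
  have hcoeffP : ∀ k : ℕ, v (P.coeff k) =
      v P.leadingCoeff + v ((QB * (QM * QA)).coeff k) := by
    intro k
    conv_lhs => rw [hPfact]
    rw [Polynomial.coeff_C_mul, hmul]
  set HH := v P.leadingCoeff +
    (SB + (Multiset.card M + Multiset.card A) • (↑γ : WithTop Γ)) with hHHdef
  have hFge : ∀ k : ℕ, HH ≤ v (P.coeff k) + k • (↑γ : WithTop Γ) := by
    intro k
    rw [hcoeffP k, add_assoc, hHHdef]
    exact add_le_add_right (hQge k) _
  have hFlow : ∀ k : ℕ, k < Multiset.card A →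
      HH < v (P.coeff k) + k • (↑γ : WithTop Γ) := by
    intro k hk
    rw [hcoeffP k, add_assoc, hHHdef]
    exact WithTop.add_lt_add_left hvc (hQlow k hk)
  have hFhigh : ∀ k : ℕ, Multiset.card M + Multiset.card A < k →
      HH < v (P.coeff k) + k • (↑γ : WithTop Γ) := by
    intro k hk
    rw [hcoeffP k, add_assoc, hHHdef]
    exact WithTop.add_lt_add_left hvc (hQhigh k hk)
  have hFa : v (P.coeff (Multiset.card A)) + (Multiset.card A) • (↑γ : WithTop Γ) = HH := by
    rw [hcoeffP, hQa, hHHdef, add_assoc, add_assoc, ← add_nsmul]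
  have hFb : v (P.coeff (Multiset.card M + Multiset.card A)) +
      (Multiset.card M + Multiset.card A) • (↑γ : WithTop Γ) = HH := by
    rw [hcoeffP, hQb, hHHdef, add_assoc]
  -- endgame
  have hFij : v (P.coeff i) + i • (↑γ : WithTop Γ) =
      v (P.coeff j) + j • (↑γ : WithTop Γ) := by
    calc v (P.coeff i) + i • (↑γ : WithTop Γ)
        = ((j - i) • (↑γ : WithTop Γ) + v (P.coeff j)) + i • (↑γ : WithTop Γ) := by rw [hγ]
      _ = v (P.coeff j) + ((j - i) • (↑γ : WithTop Γ) + i • (↑γ : WithTop Γ)) := by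
          rw [add_comm ((j - i) • (↑γ : WithTop Γ)) (v (P.coeff j)), add_assoc]
      _ = v (P.coeff j) + j • (↑γ : WithTop Γ) := by
          rw [← add_nsmul, Nat.sub_add_cancel hij.le]
  have hai : Multiset.card A = i := by
    rcases lt_trichotomy (Multiset.card A) i with h | h | h
    · have h1 := hlow _ h
      rw [hFa] at h1
      exact absurd (hFge i) (not_le.2 h1)
    · exact h
    · exfalso
      have hAd : Multiset.card A ≤ d := by omega
      have hFiA : v (P.coeff i) + i • (↑γ : WithTop Γ) ≤ HH := by
        rcases lt_trichotomy (Multiset.card A) j with hh | hh | hh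
        · have h2 := hmid (Multiset.card A) h hh
          rw [hFa] at h2
          exact h2
        · refine le_of_eq (hFij.trans ?_)
          rw [← hh, hFa]
        · have h2 := hhigh (Multiset.card A) hh hAd
          rw [hFa] at h2
          exact absurd (hFge j) (not_le.2 h2)
      exact absurd hFiA (not_le.2 (hFlow i h))
  have hFi_eq : v (P.coeff i) + i • (↑γ : WithTop Γ) = HH := by
    rw [← hai]; exact hFa
  have hbj : Multiset.card M + Multiset.card A = j := by
    rcases lt_trichotomy (Multiset.card M + Multiset.card A) j with h | h | h
    · exfalso
      have h1 := hFhigh j h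
      rw [← hFij, hFi_eq] at h1
      exact absurd h1 (lt_irrefl _)
    · exact h
    · exfalso
      have hbd : Multiset.card M + Multiset.card A ≤ d := by omega
      have h1 := hhigh _ h hbd
      rw [hFb] at h1
      exact absurd (hFge j) (not_le.2 h1)
  omega
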